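/- Let α ∈ ℂ, β ∈ ℝ with β > Re α, and let u : (0,1] → ℂ be continuously differentiable with |x * u'(x) − α * u(x)| ≤ C * x^β for all x ∈ (0,1]. Then the limit lim_{x → 0⁺} x^{-α} u(x) exists in ℂ. -/

import Mathlib

open Filter

/-- If `β > Re α` and `|x u'(x) − α u(x)| ≤ C x^β` on `(0,1]` for a `C¹` function `u`,
then `x^(−α) u(x)` has a limit as `x → 0⁺`. -/
theorem stmt4 (α : ℂ) (β C : ℝ) (hβ : α.re < β) (u u' : ℝ → ℂ)
    (hderiv : ∀ x ∈ Set.Ioc (0 : ℝ) 1, HasDerivAt u (u' x) x)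
    (hcont : ContinuousOn u' (Set.Ioc 0 1))
    (hbound : ∀ x ∈ Set.Ioc (0 : ℝ) 1, ‖(x : ℂ) * u' x - α * u x‖ ≤ C * x ^ β) :
    ∃ l : ℂ, Tendsto (fun x : ℝ => (x : ℂ) ^ (-α) * u x)
      (nhdsWithin 0 (Set.Ioi 0)) (nhds l) := by
  set γ : ℝ := β - α.re with hγdef
  have hγ : 0 < γ := sub_pos.2 hβ
  set g : ℝ → ℂ := fun x => (x : ℂ) ^ (-α) * u x with hg
  set g' : ℝ → ℂ := fun x => (x : ℂ) ^ (-α - 1) * ((x : ℂ) * u' x - α * u x) with hg'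
  have hC : 0 ≤ C := by
    have h1 := hbound 1 ⟨one_pos, le_refl 1⟩
    have := (norm_nonneg ((1 : ℂ) * u' 1 - α * u 1)).trans h1
    simpa using this
  -- derivative of g
  have hgderiv : ∀ x ∈ Set.Ioc (0 : ℝ) 1, HasDerivAt g (g' x) x := by
    intro x hx
    have hx0 : (0 : ℝ) < x := hx.1
    have hxc : ((x : ℝ) : ℂ) ≠ 0 := by exact_mod_cast hx0.ne'
    have hslit : ((x : ℝ) : ℂ) ∈ Complex.slitPlane := Complex.ofReal_mem_slitPlane.2 hx0
    have h1 : HasDerivAt (fun t : ℝ => (t : ℂ) ^ (-α)) (-α * (x : ℂ) ^ (-α - 1)) x := by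
      have := ((hasDerivAt_id ((x : ℝ) : ℂ)).cpow_const (c := -α) (by simpa using hslit)).comp_ofReal
      simpa using this
    have h2 := h1.mul (hderiv x hx)
    have key : ((x : ℝ) : ℂ) ^ (-α) = (x : ℂ) ^ (-α - 1) * x := by
      rw [Complex.cpow_sub _ _ hxc, Complex.cpow_one, div_mul_cancel₀ _ hxc]
    refine h2.congr_deriv ?_
    rw [hg']
    simp only [key]
    ring
  -- norm bound on g'
  have hg'bound : ∀ x ∈ Set.Ioc (0 : ℝ) 1, ‖g' x‖ ≤ C * x ^ (γ - 1) := by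
    intro x hx
    have hx0 : (0 : ℝ) < x := hx.1
    have hnorm : ‖((x : ℝ) : ℂ) ^ (-α - 1)‖ = x ^ (-α.re - 1) := by
      rw [Complex.norm_cpow_eq_rpow_re_of_pos hx0]
      norm_num
    calc ‖g' x‖ = ‖((x : ℝ) : ℂ) ^ (-α - 1)‖ * ‖(x : ℂ) * u' x - α * u x‖ := norm_mul _ _
      _ ≤ x ^ (-α.re - 1) * (C * x ^ β) := by
          rw [hnorm]
          exact mul_le_mul_of_nonneg_left (hbound x hx) (Real.rpow_nonneg hx0.le _)
      _ = C * x ^ (γ - 1) := by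
          rw [hγdef, show β - α.re - 1 = -α.re - 1 + β by ring, Real.rpow_add hx0]
          ring
  -- continuity of g'
  have hucont : ContinuousOn u (Set.Ioc 0 1) := fun x hx =>
    (hderiv x hx).continuousAt.continuousWithinAt
  have hg'cont : ContinuousOn g' (Set.Ioc 0 1) := by
    apply ContinuousOn.mul
    · intro x hx
      exact ((continuousAt_cpow_const
        (Complex.ofReal_mem_slitPlane.2 hx.1)).comp
        Complex.continuous_ofReal.continuousAt).continuousWithinAt
    · exact (Complex.continuous_ofReal.continuousOn.mul hcont).sub
        (continuousOn_const.mul hucont)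
  -- key estimate
  have hkey : ∀ x y : ℝ, 0 < x → x ≤ y → y ≤ 1 → ‖g y - g x‖ ≤ C * y ^ γ / γ := by
    intro x y hx0 hxy hy1
    have hsub : Set.uIcc x y ⊆ Set.Ioc 0 1 := by
      rw [Set.uIcc_of_le hxy]
      exact fun t ht => ⟨lt_of_lt_of_le hx0 ht.1, le_trans ht.2 hy1⟩
    have hint : IntervalIntegrable g' MeasureTheory.volume x y :=
      (hg'cont.mono hsub).intervalIntegrable
    have hftc : ∫ t in x..y, g' t = g y - g x :=
      intervalIntegral.integral_eq_sub_of_hasDerivAt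
        (fun t ht => hgderiv t (hsub ht)) hint
    have hboundint : IntervalIntegrable (fun t : ℝ => C * t ^ (γ - 1))
        MeasureTheory.volume x y :=
      (intervalIntegral.intervalIntegrable_rpow' (by linarith)).const_mul C
    have hae : ∀ᵐ t ∂MeasureTheory.volume.restrict (Set.uIoc x y),
        ‖g' t‖ ≤ C * t ^ (γ - 1) := by
      refine (MeasureTheory.ae_restrict_iff' measurableSet_uIoc).2
        (Filter.Eventually.of_forall fun t ht => ?_)
      rw [Set.uIoc_of_le hxy] at ht
      exact hg'bound t ⟨lt_of_lt_of_le hx0 ht.1.le, le_trans ht.2 hy1⟩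
    have hle := intervalIntegral.norm_integral_le_abs_of_norm_le hae hboundint
    rw [hftc] at hle
    have hcomp : ∫ t in x..y, C * t ^ (γ - 1) = C * ((y ^ γ - x ^ γ) / γ) := by
      rw [intervalIntegral.integral_const_mul, integral_rpow (Or.inl (by linarith))]
      norm_num
    rw [hcomp] at hle
    have hx' : 0 ≤ x ^ γ := Real.rpow_nonneg hx0.le _
    have hmono : x ^ γ ≤ y ^ γ := Real.rpow_le_rpow hx0.le hxy hγ.le
    have habs : |C * ((y ^ γ - x ^ γ) / γ)| = C * ((y ^ γ - x ^ γ) / γ) := by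
      apply abs_of_nonneg
      apply mul_nonneg hC
      apply div_nonneg (by linarith) hγ.le
    rw [habs] at hle
    calc ‖g y - g x‖ ≤ C * ((y ^ γ - x ^ γ) / γ) := hle
      _ ≤ C * y ^ γ / γ := by
          rw [mul_div_assoc]
          apply mul_le_mul_of_nonneg_left _ hC
          apply div_le_div_of_nonneg_right _ hγ.le
          linarith
  -- Cauchy
  have hcauchy : Cauchy (Filter.map g (nhdsWithin 0 (Set.Ioi 0))) := by
    rw [Metric.cauchy_iff]
    refine ⟨Filter.map_neBot, fun ε hε => ?_⟩
    -- find small threshold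
    have htend : Tendsto (fun t : ℝ => C * t ^ γ / γ) (nhdsWithin 0 (Set.Ioi 0)) (nhds 0) := by
      have h0 : Tendsto (fun t : ℝ => t ^ γ) (nhds 0) (nhds 0) := by
        have := (Real.continuousAt_rpow_const 0 γ (Or.inr hγ.le)).tendsto
        rwa [Real.zero_rpow hγ.ne'] at this
      have := ((h0.const_mul C).div_const γ).mono_left (nhdsWithin_le_nhds (s := Set.Ioi (0:ℝ)))
      simpa using this
    have h1 : ∀ᶠ t in nhdsWithin 0 (Set.Ioi 0), C * t ^ γ / γ < ε :=
      htend.eventually (gt_mem_nhds hε)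
    have h2 : Set.Ioo (0 : ℝ) 1 ∈ nhdsWithin (0 : ℝ) (Set.Ioi 0) :=
      Ioo_mem_nhdsGT_of_mem (by constructor <;> norm_num)
    have hs : {t : ℝ | t ∈ Set.Ioo (0 : ℝ) 1 ∧ C * t ^ γ / γ < ε} ∈
        nhdsWithin (0 : ℝ) (Set.Ioi 0) := by
      filter_upwards [h2, h1] with t ht1 ht2
      exact ⟨ht1, ht2⟩
    refine ⟨g '' {t : ℝ | t ∈ Set.Ioo (0 : ℝ) 1 ∧ C * t ^ γ / γ < ε},
      Filter.image_mem_map hs, ?_⟩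
    rintro _ ⟨a, ⟨ha, haε⟩, rfl⟩ _ ⟨b, ⟨hb, hbε⟩, rfl⟩
    rcases le_total a b with hab | hab
    · rw [dist_eq_norm, norm_sub_rev]
      exact lt_of_le_of_lt (hkey a b ha.1 hab hb.2.le) hbε
    · rw [dist_eq_norm]
      exact lt_of_le_of_lt (hkey b a hb.1 hab ha.2.le) haε
  obtain ⟨l, hl⟩ := CompleteSpace.complete hcauchy
  exact ⟨l, hl⟩
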